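/- Let ℓ > 0, a > 0 with a < ℓ, and let f : [0, ℓ) → ℝ be differentiable with f′(t) ≥ f(t)² − 1 for all t ∈ [0, ℓ) and f(0) ≥ coth a. Then f is unbounded above on [0, a); in particular no such f can be continuous on all of [0, ℓ) with ℓ > a, so any differentiable f with f′ ≥ f² − 1 and f(0) ≥ coth a is defined only on an interval of length at most a. -/

import Mathlib

/-- The real hyperbolic cotangent, `coth x = cosh x / sinh x`. -/
noncomputable def Real.coth (x : ℝ) : ℝ := Real.cosh x / Real.sinh x

lemma coth_anti {x y : ℝ} (hx : 0 < x) (hxy : x ≤ y) : Real.coth y ≤ Real.coth x := by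
  unfold Real.coth
  rw [div_le_div_iff₀ (Real.sinh_pos_iff.2 (hx.trans_le hxy)) (Real.sinh_pos_iff.2 hx)]
  have := Real.sinh_nonneg_iff.2 (by linarith : (0:ℝ) ≤ y - x)
  rw [Real.sinh_sub] at this
  nlinarith

lemma hasDerivAt_coth {u : ℝ} (hu : 0 < u) : HasDerivAt Real.coth (1 - Real.coth u ^ 2) u := by
  have hs : Real.sinh u ≠ 0 := ne_of_gt (Real.sinh_pos_iff.2 hu)
  have h := (Real.hasDerivAt_cosh u).div (Real.hasDerivAt_sinh u) hs
  refine h.congr_deriv ?_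
  have hc := Real.cosh_sq u
  unfold Real.coth
  field_simp

lemma one_lt_coth {x : ℝ} (hx : 0 < x) : 1 < Real.coth x := by
  unfold Real.coth
  rw [lt_div_iff₀ (Real.sinh_pos_iff.2 hx), one_mul]
  exact Real.sinh_lt_cosh x

/-- **Unboundedness / blow-up.**  If `0 < a < ℓ` and `f` is differentiable on
`[0, ℓ)` with `f′ t ≥ (f t)² − 1` there and `f 0 ≥ coth a`, then `f` is
unbounded above on `[0, a)`; in particular no such `f` exists on an interval
of length greater than `a`. -/
theorem riccati_unbounded (ℓ a : ℝ) (hℓ : 0 < ℓ) (ha : 0 < a) (haℓ : a < ℓ)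
    (f f' : ℝ → ℝ)
    (hdiff : ∀ t ∈ Set.Ico (0:ℝ) ℓ, HasDerivWithinAt f (f' t) (Set.Ico (0:ℝ) ℓ) t)
    (hineq : ∀ t ∈ Set.Ico (0:ℝ) ℓ, f' t ≥ (f t) ^ 2 - 1)
    (h0 : f 0 ≥ Real.coth a) :
    ¬ BddAbove (f '' Set.Ico (0:ℝ) a) := by
  -- Key comparison: f t ≥ coth (a - t) on [0, a)
  have key : ∀ t ∈ Set.Ico (0:ℝ) a, Real.coth (a - t) ≤ f t := by
    rintro t ⟨ht0, hta⟩
    set lam : ℝ := 2 * Real.coth (a - t) + 1 with hlam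
    have hat : 0 < a - t := by linarith
    -- f has right derivatives on [0, t]
    have hfd : ∀ x ∈ Set.Ico (0:ℝ) t, HasDerivWithinAt f (f' x) (Set.Ici x) x := by
      rintro x ⟨hx0, hxt⟩
      have hxl : x < ℓ := by linarith
      refine (hdiff x ⟨hx0, hxl⟩).mono_of_mem_nhdsWithin ?_
      have : Set.Ici x ∩ Set.Iio ℓ ⊆ Set.Ico 0 ℓ := fun y hy => ⟨hx0.trans hy.1, hy.2⟩
      exact Filter.mem_of_superset (inter_mem_nhdsWithin _ (isOpen_Iio.mem_nhds hxl)) this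
    have hfc : ContinuousOn f (Set.Icc 0 t) := by
      intro x hx
      have hxm : x ∈ Set.Ico (0:ℝ) ℓ := ⟨hx.1, by linarith [hx.2]⟩
      exact ((hdiff x hxm).continuousWithinAt).mono (fun y hy => ⟨hy.1, by linarith [hy.2]⟩)
    have main : ∀ ε > (0:ℝ), Real.coth (a - t) - ε * Real.exp (lam * t) ≤ f t := by
      intro ε hε
      set g : ℝ → ℝ := fun s => Real.coth (a - s) - ε * Real.exp (lam * s) with hg
      set g' : ℝ → ℝ := fun s => (Real.coth (a - s) ^ 2 - 1) - ε * lam * Real.exp (lam * s)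
        with hg'
      have hgd : ∀ x, x ∈ Set.Icc (0:ℝ) t → HasDerivAt g (g' x) x := by
        rintro x ⟨hx0, hxt⟩
        have hax : 0 < a - x := by linarith
        have h1 : HasDerivAt (fun s => Real.coth (a - s)) (Real.coth (a - x) ^ 2 - 1) x := by
          have := (hasDerivAt_coth hax).comp x (((hasDerivAt_id x).const_sub a))
          refine this.congr_deriv ?_
          ring
        have h2 : HasDerivAt (fun s => ε * Real.exp (lam * s)) (ε * lam * Real.exp (lam * x)) x := by
          have := ((Real.hasDerivAt_exp (lam * x)).comp x ((hasDerivAt_id x).const_mul lam))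
          simpa [mul_comm, mul_assoc, mul_left_comm] using this.const_mul ε
        exact h1.sub h2
      have comp := image_le_of_deriv_right_lt_deriv_boundary'
        (f := g) (f' := g') (a := 0) (b := t) (B := f) (B' := f')
        (fun x hx => (hgd x hx).continuousAt.continuousWithinAt)
        (fun x hx => (hgd x ⟨hx.1, hx.2.le⟩).hasDerivWithinAt)
        ?_ hfc hfd ?_
      · have := comp (Set.right_mem_Icc.2 ht0)
        simpa [hg] using this
      · -- g 0 ≤ f 0
        have : g 0 = Real.coth a - ε := by simp [hg]
        rw [this]
        linarith
      · -- contact: g x = f x → g' x < f' x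
        rintro x ⟨hx0, hxt⟩ hgx
        have hax : 0 < a - x := by linarith
        have hxl : x ∈ Set.Ico (0:ℝ) ℓ := ⟨hx0, by linarith⟩
        have hbnd := hineq x hxl
        have hcc : Real.coth (a - x) ≤ Real.coth (a - t) := coth_anti hat (by linarith)
        have hepos : 0 < ε * Real.exp (lam * x) := by positivity
        have hfx : f x = Real.coth (a - x) - ε * Real.exp (lam * x) := by
          rw [← hgx]
        have : (f x) ^ 2 - 1 > g' x := by
          rw [hfx]
          simp only [hg']
          nlinarith [Real.exp_pos (lam * x), sq_nonneg (ε * Real.exp (lam * x))]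
        linarith
    -- let ε → 0
    by_contra hcon
    push_neg at hcon
    have hE : 0 < Real.exp (lam * t) := Real.exp_pos _
    set ε := (Real.coth (a - t) - f t) / (2 * Real.exp (lam * t)) with hε
    have hεpos : 0 < ε := div_pos (by linarith) (by positivity)
    have := main ε hεpos
    rw [hε] at this
    rw [div_mul_eq_mul_div, mul_comm (2:ℝ), mul_div_assoc] at this
    have h2 : Real.exp (lam * t) / (Real.exp (lam * t) * 2) = 1/2 := by
      field_simp
    rw [h2] at this
    linarith
  -- coth (a - t) → ∞ as t → a⁻
  rintro ⟨M, hM⟩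
  have hfM : ∀ t ∈ Set.Ico (0:ℝ) a, f t ≤ M := fun t ht => hM ⟨t, ht, rfl⟩
  -- pick t with coth (a - t) > M
  have hcoth_big : ∀ᶠ t in nhdsWithin a (Set.Iio a), M < Real.coth (a - t) := by
    have hs : Filter.Tendsto (fun t : ℝ => Real.sinh (a - t)) (nhdsWithin a (Set.Iio a)) (nhdsWithin 0 (Set.Ioi 0)) := by
      rw [tendsto_nhdsWithin_iff]
      constructor
      · have : Filter.Tendsto (fun t : ℝ => Real.sinh (a - t)) (nhds a) (nhds (Real.sinh (a - a))) :=
          (Real.continuous_sinh.comp (continuous_const.sub continuous_id)).tendsto a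
        simpa using this.mono_left nhdsWithin_le_nhds
      · filter_upwards [self_mem_nhdsWithin] with x hx
        exact Real.sinh_pos_iff.2 (by simpa using sub_pos.2 (Set.mem_Iio.1 hx))
    have hinv : Filter.Tendsto (fun t : ℝ => (Real.sinh (a - t))⁻¹) (nhdsWithin a (Set.Iio a)) Filter.atTop :=
      tendsto_inv_nhdsGT_zero.comp hs
    have hmono : ∀ᶠ t in nhdsWithin a (Set.Iio a), (Real.sinh (a - t))⁻¹ ≤ Real.coth (a - t) := by
      filter_upwards [self_mem_nhdsWithin] with x hx
      have hax : 0 < a - x := sub_pos.2 (Set.mem_Iio.1 hx)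
      have hsp := Real.sinh_pos_iff.2 hax
      unfold Real.coth
      rw [div_eq_mul_inv]
      nlinarith [Real.one_le_cosh (a - x), inv_pos.2 hsp]
    exact (Filter.tendsto_atTop_mono' _ hmono hinv).eventually_gt_atTop M
  have hIco : ∀ᶠ t in nhdsWithin a (Set.Iio a), t ∈ Set.Ico (0:ℝ) a := by
    have h1 : ∀ᶠ t in nhdsWithin a (Set.Iio a), 0 < t := by
      apply eventually_nhdsWithin_of_eventually_nhds
      exact eventually_gt_nhds ha
    filter_upwards [h1, self_mem_nhdsWithin] with x hx1 hx2
    exact ⟨hx1.le, hx2⟩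
  have hfin : ∀ᶠ t in nhdsWithin a (Set.Iio a), False := by
    filter_upwards [hcoth_big, hIco] with x hb hm
    exact absurd (hfM x hm) (not_le.2 (hb.trans_le (key x hm)))
  obtain ⟨x, hx⟩ := hfin.exists
  exact hx
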